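/- Let p < q be primes, let k, r ≥ 1 be integers, and let l be a prime with l ≠ p and l ≠ q. If s(p^k·q^r)·l^∞ ~ s(p^{k+1}·q^{r+1})·l^∞, then (p^{k+1} − 1)/(p − 1) = (q^{r+1} − 1)/(q − 1); in other words, any such relation with (p^{k+1}, q^{r+1}) ≠ (2^5, 5^3) yields a counterexample to Goormaghtigh's conjecture. -/

import Mathlib

noncomputable section
set_option maxHeartbeats 1000000
open scoped TensorProduct

instance (p : Nat.Primes) : Fact (p : ℕ).Prime := ⟨p.2⟩

/-- The profinite integers `Ẑ = ∏_p ℤ_p`. -/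
abbrev ZHat : Type := ∀ p : Nat.Primes, ℤ_[(p : ℕ)]

/-- The finite adele ring `𝔸_f = Ẑ ⊗ ℚ` of `ℚ`. -/
abbrev AF : Type := ZHat ⊗[ℤ] ℚ

/-- The embedding `Ẑ ⊆ 𝔸_f`. -/
def iZ : ZHat →+* AF := Algebra.TensorProduct.includeLeftRingHom

/-- The diagonal embedding `ℚ ⊆ 𝔸_f`. -/
def iQ : ℚ →+* AF :=
  (Algebra.TensorProduct.includeRight (R := ℤ) (A := ZHat) (B := ℚ)).toRingHom

/-- The relation `z ~ z'` on `𝔸_f`: there are `a, b, c, d ∈ ℚ` with `ad − bc ≠ 0`,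
`a + c·z` a unit of `𝔸_f`, and `(b + d·z)·(a + c·z)⁻¹ − z'` in the diagonal image
of `ℚ` (the partially defined `PGL₂(ℚ)`-action `z ↦ (b+dz)/(a+cz)`). -/
def adeleRel (z z' : AF) : Prop :=
  ∃ a b c d : ℚ, a * d - b * c ≠ 0 ∧
    ∃ w : AF, (iQ a + iQ c * z) * w = 1 ∧
      ∃ q : ℚ, (iQ b + iQ d * z) * w - z' = iQ q

/-- The profinite integer `s(n)` whose `p`-th component is `p^{v_p(n)}`, the largest
power of `p` dividing `n` (with component `0` when `n = 0`). -/
def sFun (n : ℕ) : ZHat :=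
  fun p => if n = 0 then 0 else ((p : ℕ) : ℤ_[(p : ℕ)]) ^ (n.factorization (p : ℕ))

/-- The profinite integer `l^∞` whose `l`-th component is `0` and whose other
components are `1`. -/
def lInf (l : Nat.Primes) : ZHat := fun p => if p = l then 0 else 1

/-- Evaluation of `𝔸_f` at the `t`-th component, landing in `ℚ_t`. -/
noncomputable def fZ (t : Nat.Primes) : ZHat →+* ℚ_[(t:ℕ)] :=
  (PadicInt.Coe.ringHom).comp (Pi.evalRingHom (fun p : Nat.Primes => ℤ_[(p:ℕ)]) t)

noncomputable def phi (t : Nat.Primes) : AF →ₐ[ℤ] ℚ_[(t:ℕ)] :=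
  Algebra.TensorProduct.lift (fZ t).toIntAlgHom (Rat.castHom ℚ_[(t:ℕ)]).toIntAlgHom
    (fun _ _ => Commute.all _ _)

lemma phi_iZ (t : Nat.Primes) (x : ZHat) :
    phi t (iZ x) = ((x t : ℤ_[(t:ℕ)]) : ℚ_[(t:ℕ)]) := by
  have h0 : iZ x = x ⊗ₜ[ℤ] (1:ℚ) := rfl
  rw [h0, phi]
  erw [Algebra.TensorProduct.lift_tmul]
  simp [fZ]; rfl

lemma phi_iQ (t : Nat.Primes) (r : ℚ) :
    phi t (iQ r) = (r : ℚ_[(t:ℕ)]) := by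
  have h0 : iQ r = (1:ZHat) ⊗ₜ[ℤ] r := rfl
  rw [h0, phi]
  erw [Algebra.TensorProduct.lift_tmul]
  simp [fZ]
  erw [map_one, one_mul]

lemma phi_comp (t : Nat.Primes) (l : Nat.Primes) (n : ℕ) (hn : n ≠ 0) (htl : t ≠ l) :
    phi t (iZ (sFun n * lInf l))
      = ((((t:ℕ) : ℚ) ^ (n.factorization (t:ℕ)) : ℚ) : ℚ_[(t:ℕ)]) := by
  rw [phi_iZ]
  simp [sFun, lInf, Pi.mul_apply, hn, htl]

lemma phi_comp_l (l : Nat.Primes) (n : ℕ) :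
    phi l (iZ (sFun n * lInf l)) = ((0 : ℚ) : ℚ_[(l:ℕ)]) := by
  rw [phi_iZ]
  simp [sFun, lInf, Pi.mul_apply]

/-- (relation to Goormaghtigh's conjecture) if `p < q` are primes,
`k, r ≥ 1`, and `l` is a prime different from `p` and `q`, then
`s(p^k·q^r)·l^∞ ~ s(p^{k+1}·q^{r+1})·l^∞` forces
`(p^{k+1} − 1)/(p − 1) = (q^{r+1} − 1)/(q − 1)`. -/
theorem rel_implies_goormaghtigh (p q : ℕ) (hp : p.Prime) (hq : q.Prime) (hpq : p < q)
    (k r : ℕ) (hk : 1 ≤ k) (hr : 1 ≤ r) (l : Nat.Primes) (hlp : (l : ℕ) ≠ p)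
    (hlq : (l : ℕ) ≠ q)
    (h : adeleRel (iZ (sFun (p ^ k * q ^ r) * lInf l))
      (iZ (sFun (p ^ (k + 1) * q ^ (r + 1)) * lInf l))) :
    ((p : ℚ) ^ (k + 1) - 1) / ((p : ℚ) - 1) = ((q : ℚ) ^ (r + 1) - 1) / ((q : ℚ) - 1) := by
  obtain ⟨a, b, c, d, hdet, w, hw, q0, hq0⟩ := h
  set z : AF := iZ (sFun (p ^ k * q ^ r) * lInf l) with hz
  set z' : AF := iZ (sFun (p ^ (k + 1) * q ^ (r + 1)) * lInf l) with hz'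
  have hpn : p ≠ 0 := hp.pos.ne'
  have hqn : q ≠ 0 := hq.pos.ne'
  have hn1 : p ^ k * q ^ r ≠ 0 := by positivity
  have hn2 : p ^ (k+1) * q ^ (r+1) ≠ 0 := by positivity
  -- the key componentwise equation
  have key : ∀ (t : Nat.Primes) (m m' : ℚ),
      phi t z = ((m : ℚ) : ℚ_[(t:ℕ)]) → phi t z' = ((m' : ℚ) : ℚ_[(t:ℕ)]) →
      b + d * m = (m' + q0) * (a + c * m) := by
    intro t m m' hm hm'
    have h1 := congrArg (phi t) hw
    have h2 := congrArg (phi t) hq0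
    simp only [map_mul, map_add, map_one, map_sub, phi_iQ, hm, hm'] at h1 h2
    have h3 : ((b:ℚ_[(t:ℕ)]) + (d:ℚ_[(t:ℕ)]) * (m:ℚ_[(t:ℕ)]))
        = ((m':ℚ_[(t:ℕ)]) + (q0:ℚ_[(t:ℕ)])) * ((a:ℚ_[(t:ℕ)]) + (c:ℚ_[(t:ℕ)]) * (m:ℚ_[(t:ℕ)])) := by
      calc ((b:ℚ_[(t:ℕ)]) + (d:ℚ_[(t:ℕ)]) * (m:ℚ_[(t:ℕ)]))
          = ((b:ℚ_[(t:ℕ)]) + (d:ℚ_[(t:ℕ)]) * (m:ℚ_[(t:ℕ)]))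
            * (((a:ℚ_[(t:ℕ)]) + (c:ℚ_[(t:ℕ)]) * (m:ℚ_[(t:ℕ)])) * phi t w) := by rw [h1, mul_one]
        _ = (((b:ℚ_[(t:ℕ)]) + (d:ℚ_[(t:ℕ)]) * (m:ℚ_[(t:ℕ)])) * phi t w - (m':ℚ_[(t:ℕ)])
              + (m':ℚ_[(t:ℕ)])) * ((a:ℚ_[(t:ℕ)]) + (c:ℚ_[(t:ℕ)]) * (m:ℚ_[(t:ℕ)])) := by ring
        _ = ((m':ℚ_[(t:ℕ)]) + (q0:ℚ_[(t:ℕ)])) * ((a:ℚ_[(t:ℕ)]) + (c:ℚ_[(t:ℕ)]) * (m:ℚ_[(t:ℕ)])) := by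
            rw [h2]; ring
    have h4 : ((b + d * m : ℚ) : ℚ_[(t:ℕ)]) = (((m' + q0) * (a + c * m) : ℚ) : ℚ_[(t:ℕ)]) := by
      push_cast
      exact h3
    exact_mod_cast h4
  -- the primes as Nat.Primes
  let pP : Nat.Primes := ⟨p, hp⟩
  let qP : Nat.Primes := ⟨q, hq⟩
  obtain ⟨t0, ht0ge, ht0p⟩ := Nat.exists_infinite_primes (max (max p q) (l:ℕ) + 1)
  let tP : Nat.Primes := ⟨t0, ht0p⟩
  have hpl : pP ≠ l := fun hE => hlp (by rw [← hE])
  have hql : qP ≠ l := fun hE => hlq (by rw [← hE])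
  have ht0pne : t0 ≠ p := by omega
  have ht0qne : t0 ≠ q := by omega
  have htl : tP ≠ l := by
    intro hE
    have : (tP : ℕ) = (l : ℕ) := by rw [hE]
    simp only [tP] at this
    omega
  -- factorization facts
  have hfac1 : (p ^ k * q ^ r).factorization = Finsupp.single p k + Finsupp.single q r := by
    rw [Nat.factorization_mul (pow_ne_zero _ hpn) (pow_ne_zero _ hqn),
      hp.factorization_pow, hq.factorization_pow]
  have hfac2 : (p ^ (k+1) * q ^ (r+1)).factorization
      = Finsupp.single p (k+1) + Finsupp.single q (r+1) := by
    rw [Nat.factorization_mul (pow_ne_zero _ hpn) (pow_ne_zero _ hqn),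
      hp.factorization_pow, hq.factorization_pow]
  have hqp : q ≠ p := hpq.ne'
  -- the four equations
  have Eq_l : b + d * 0 = (0 + q0) * (a + c * 0) :=
    key l 0 0 (phi_comp_l l _) (phi_comp_l l _)
  have Eq_p : b + d * (p:ℚ)^k = ((p:ℚ)^(k+1) + q0) * (a + c * (p:ℚ)^k) := by
    refine key pP ((p:ℚ)^k) ((p:ℚ)^(k+1)) ?_ ?_
    · rw [phi_comp pP l _ hn1 hpl]
      norm_num [hfac1, Finsupp.single_apply, hqp, show (pP:ℕ) = p from rfl]
    · rw [phi_comp pP l _ hn2 hpl]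
      norm_num [hfac2, Finsupp.single_apply, hqp, show (pP:ℕ) = p from rfl]
  have Eq_q : b + d * (q:ℚ)^r = ((q:ℚ)^(r+1) + q0) * (a + c * (q:ℚ)^r) := by
    refine key qP ((q:ℚ)^r) ((q:ℚ)^(r+1)) ?_ ?_
    · rw [phi_comp qP l _ hn1 hql]
      norm_num [hfac1, Finsupp.single_apply, hpq.ne, show (qP:ℕ) = q from rfl]
    · rw [phi_comp qP l _ hn2 hql]
      norm_num [hfac2, Finsupp.single_apply, hpq.ne, show (qP:ℕ) = q from rfl]
  have hpt0 : p ≠ t0 := Ne.symm ht0pne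
  have hqt0 : q ≠ t0 := Ne.symm ht0qne
  have Eq_t : b + d * 1 = (1 + q0) * (a + c * 1) := by
    refine key tP 1 1 ?_ ?_
    · rw [phi_comp tP l _ hn1 htl]
      norm_num [hfac1, Finsupp.single_apply, hpt0, hqt0, show (tP:ℕ) = t0 from rfl]
    · rw [phi_comp tP l _ hn2 htl]
      norm_num [hfac2, Finsupp.single_apply, hpt0, hqt0, show (tP:ℕ) = t0 from rfl]
  -- now the linear algebra over ℚ
  have hp2 : (2:ℚ) ≤ (p:ℚ) := by exact_mod_cast hp.two_le
  have hq2 : (2:ℚ) ≤ (q:ℚ) := by exact_mod_cast hq.two_le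
  have hp1 : (p:ℚ) - 1 ≠ 0 := by intro hE; linarith
  have hq1 : (q:ℚ) - 1 ≠ 0 := by intro hE; linarith
  have hpk0 : (p:ℚ)^k ≠ 0 := pow_ne_zero _ (by positivity)
  have hqr0 : (q:ℚ)^r ≠ 0 := pow_ne_zero _ (by positivity)
  have hA : a + c = (p:ℚ) * a + (p:ℚ)^(k+1) * c := by
    have hA' : ((a + c) - ((p:ℚ) * a + (p:ℚ)^(k+1) * c)) * (p:ℚ)^k = 0 := by
      linear_combination Eq_p - (p:ℚ)^k * Eq_t + ((p:ℚ)^k - 1) * Eq_l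
    rcases mul_eq_zero.mp hA' with hE | hE
    · linarith
    · exact absurd hE hpk0
  have hB : a + c = (q:ℚ) * a + (q:ℚ)^(r+1) * c := by
    have hB' : ((a + c) - ((q:ℚ) * a + (q:ℚ)^(r+1) * c)) * (q:ℚ)^r = 0 := by
      linear_combination Eq_q - (q:ℚ)^r * Eq_t + ((q:ℚ)^r - 1) * Eq_l
    rcases mul_eq_zero.mp hB' with hE | hE
    · linarith
    · exact absurd hE hqr0
  have hc : c ≠ 0 := by
    intro hc0
    have ha0 : a = 0 := by
      have hE : ((p:ℚ) - 1) * a = 0 := by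
        rw [hc0] at hA
        linear_combination -hA
      rcases mul_eq_zero.mp hE with hE | hE
      · exact absurd hE hp1
      · exact hE
    have hb0 : b = 0 := by
      have : b = q0 * a := by linear_combination Eq_l
      rw [this, ha0, mul_zero]
    exact hdet (by rw [ha0, hb0, hc0]; ring)
  have hkey : ((p:ℚ)^(k+1) - 1) * ((q:ℚ) - 1) = ((q:ℚ)^(r+1) - 1) * ((p:ℚ) - 1) := by
    have hcc : ((p:ℚ)^(k+1) - 1) * ((q:ℚ) - 1) * c = ((q:ℚ)^(r+1) - 1) * ((p:ℚ) - 1) * c := by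
      linear_combination (1 - (q:ℚ)) * hA + ((p:ℚ) - 1) * hB
    exact mul_right_cancel₀ hc hcc
  rw [div_eq_div_iff hp1 hq1]
  linear_combination hkey
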